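/- Under the Davie-type solution hypotheses, there exists a constant M > 0, depending only on K, c₂, sup_x‖σ(x)‖ and sup_x‖Dσ(x)‖ (independent of ε, T and (B,𝔹)), such that for all 0 ≤ s ≤ t ≤ T: ‖R^X‖_{2α,[s,t]} ≤ M[(1 + sup_{u∈[0,T]}|X_u|)|t−s|^{1−2α} + ‖𝔹‖_{2α,[0,T]} + (‖B‖_{α,[0,T]}‖R^{σ(X)}‖_{2α,[s,t]} + ‖𝔹‖_{2α,[0,T]}‖X‖_{α,[s,t]})|t−s|^{α}]. -/

import Mathlib

open scoped BigOperators
open MeasureTheory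

noncomputable section

def pairSet {E : Type*} [NormedAddCommGroup E] (β a b : ℝ) (F : ℝ → ℝ → E) : Set ℝ :=
  {x | ∃ s t : ℝ, s ∈ Set.Icc a b ∧ t ∈ Set.Icc a b ∧ x = ‖F s t‖ / |t - s| ^ β}

noncomputable def pSup {E : Type*} [NormedAddCommGroup E] (β a b : ℝ) (F : ℝ → ℝ → E) : ℝ :=
  sSup (pairSet β a b F)

def incr {E : Type*} [NormedAddCommGroup E] (Z : ℝ → E) : ℝ → ℝ → E := fun s t => Z t - Z s

def tens {r : ℕ} (x y : EuclideanSpace ℝ (Fin r)) : EuclideanSpace ℝ (Fin r × Fin r) :=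
  (WithLp.equiv 2 _).symm (fun p => x p.1 * y p.2)

def bapp {r d : ℕ}
    (L : EuclideanSpace ℝ (Fin r) →L[ℝ] EuclideanSpace ℝ (Fin r) →L[ℝ] EuclideanSpace ℝ (Fin d))
    (M : EuclideanSpace ℝ (Fin r × Fin r)) : EuclideanSpace ℝ (Fin d) :=
  ∑ p : Fin r × Fin r, M p • L (EuclideanSpace.single p.1 1) (EuclideanSpace.single p.2 1)

def Chen {r : ℕ} (T : ℝ) (B : ℝ → EuclideanSpace ℝ (Fin r))
    (𝔹 : ℝ → ℝ → EuclideanSpace ℝ (Fin r × Fin r)) : Prop :=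
  ∀ s ∈ Set.Icc 0 T, ∀ u ∈ Set.Icc 0 T, ∀ t ∈ Set.Icc 0 T,
    𝔹 s t - 𝔹 s u - 𝔹 u t = tens (B u - B s) (B t - B u)

def RSConv {E : Type*} [NormedAddCommGroup E] (a b : ℝ) (F : ℝ → ℝ → E) (I : E) : Prop :=
  ∀ η > (0:ℝ), ∃ δ > (0:ℝ), ∀ (n : ℕ) (π : ℕ → ℝ),
    π 0 = a → π n = b → (∀ k < n, π k < π (k + 1)) →
    (∀ k < n, π (k + 1) - π k < δ) →
    ‖(∑ k ∈ Finset.range n, F (π k) (π (k + 1))) - I‖ < η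

abbrev Ed (d : ℕ) := EuclideanSpace ℝ (Fin d)

/-- The remainder `R^X_{s,t} = X_{s,t} − ε σ(X_s) B_{s,t}`. -/
def RX {r d : ℕ} (ε : ℝ) (σ : Ed d → (Ed r →L[ℝ] Ed d)) (B : ℝ → Ed r) (X : ℝ → Ed d) :
    ℝ → ℝ → Ed d :=
  fun s t => X t - X s - ε • (σ (X s)) (B t - B s)

/-- The remainder `R^{σ(X)}_{s,t} = σ(X_t) − σ(X_s) − ε Dσ(X_s)[σ(X_s) B_{s,t}]`. -/
def RsX {r d : ℕ} (ε : ℝ) (σ : Ed d → (Ed r →L[ℝ] Ed d)) (B : ℝ → Ed r) (X : ℝ → Ed d) :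
    ℝ → ℝ → (Ed r →L[ℝ] Ed d) :=
  fun s t => σ (X t) - σ (X s) - ε • (fderiv ℝ σ (X s)) ((σ (X s)) (B t - B s))

/-- `X` is a Davie-type solution of `dX = b(X)dt + ε σ(X) dB` with constant `K`. -/
def DavieSol {r d : ℕ} (T α ε K : ℝ) (b : Ed d → Ed d) (σ : Ed d → (Ed r →L[ℝ] Ed d))
    (B : ℝ → Ed r) (𝔹 : ℝ → ℝ → EuclideanSpace ℝ (Fin r × Fin r)) (X : ℝ → Ed d) : Prop :=
  ∀ s t : ℝ, 0 ≤ s → s ≤ t → t ≤ T →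
    ‖X t - X s - (∫ u in s..t, b (X u)) - ε • (σ (X s)) (B t - B s)
        - (ε^2) • bapp ((fderiv ℝ σ (X s)).comp (σ (X s))) (𝔹 s t)‖ ≤
      K * (pSup α s t (incr B) * pSup (2*α) s t (RsX ε σ B X)
            + pSup (2*α) s t 𝔹 * pSup α s t (incr X)) * (t - s) ^ (3*α)

/-- The rough path norm `‖(B,𝔹)‖_{α,[0,T]} = ‖B‖_{α,[0,T]} + ‖𝔹‖_{2α,[0,T]}^{1/2}`. -/
noncomputable def rpNorm {r : ℕ} (α T : ℝ) (B : ℝ → Ed r)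
    (𝔹 : ℝ → ℝ → EuclideanSpace ℝ (Fin r × Fin r)) : ℝ :=
  pSup α 0 T (incr B) + (pSup (2*α) 0 T 𝔹) ^ ((1:ℝ)/2)

/-! ### Auxiliary lemmas -/

lemma pSup_nonneg {E : Type*} [NormedAddCommGroup E] (β a b : ℝ) (F : ℝ → ℝ → E) :
    0 ≤ pSup β a b F := by
  apply Real.sSup_nonneg
  rintro x ⟨s, t, _, _, rfl⟩
  positivity

lemma le_pSup {E : Type*} [NormedAddCommGroup E] {β a b : ℝ} {F : ℝ → ℝ → E}
    (h : BddAbove (pairSet β a b F)) {u v : ℝ} (hu : u ∈ Set.Icc a b) (hv : v ∈ Set.Icc a b)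
    (huv : u ≠ v) : ‖F u v‖ ≤ pSup β a b F * |v - u| ^ β := by
  have h1 : ‖F u v‖ / |v - u| ^ β ≤ pSup β a b F := le_csSup h ⟨u, v, hu, hv, rfl⟩
  have h2 : (0:ℝ) < |v - u| ^ β := by
    apply Real.rpow_pos_of_pos
    rw [abs_pos, sub_ne_zero]; exact fun hh => huv hh.symm
  calc ‖F u v‖ = ‖F u v‖ / |v - u| ^ β * |v - u| ^ β := by field_simp
  _ ≤ pSup β a b F * |v - u| ^ β := by gcongr

lemma pairSet_mono {E : Type*} [NormedAddCommGroup E] {β a b a' b' : ℝ} {F : ℝ → ℝ → E}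
    (h : Set.Icc a' b' ⊆ Set.Icc a b) : pairSet β a' b' F ⊆ pairSet β a b F := by
  rintro x ⟨s, t, hs, ht, rfl⟩; exact ⟨s, t, h hs, h ht, rfl⟩

lemma pSup_mono {E : Type*} [NormedAddCommGroup E] {β a b a' b' : ℝ} {F : ℝ → ℝ → E}
    (h : BddAbove (pairSet β a b F)) (hab : a' ≤ b') (hsub : Set.Icc a' b' ⊆ Set.Icc a b) :
    pSup β a' b' F ≤ pSup β a b F :=
  csSup_le_csSup h ⟨_, a', a', ⟨le_refl _, hab⟩, ⟨le_refl _, hab⟩, rfl⟩ (pairSet_mono hsub)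

lemma coord_le_norm {ι : Type*} [Fintype ι] [DecidableEq ι] (M : EuclideanSpace ℝ ι) (p : ι) :
    |M p| ≤ ‖M‖ := by
  have := abs_real_inner_le_norm (EuclideanSpace.single p (1:ℝ)) M
  simpa [EuclideanSpace.inner_single_left] using this

lemma bapp_norm_le {r d : ℕ}
    (L : EuclideanSpace ℝ (Fin r) →L[ℝ] EuclideanSpace ℝ (Fin r) →L[ℝ] Ed d)
    (M : EuclideanSpace ℝ (Fin r × Fin r)) :
    ‖bapp L M‖ ≤ (r:ℝ)^2 * ‖L‖ * ‖M‖ := by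
  have h : ∀ p : Fin r × Fin r,
      ‖M p • L (EuclideanSpace.single p.1 1) (EuclideanSpace.single p.2 1)‖ ≤ ‖L‖ * ‖M‖ := by
    intro p
    rw [norm_smul]
    have h1 : ‖L (EuclideanSpace.single p.1 1) (EuclideanSpace.single p.2 1)‖ ≤ ‖L‖ := by
      calc ‖L (EuclideanSpace.single p.1 1) (EuclideanSpace.single p.2 1)‖
          ≤ ‖L (EuclideanSpace.single p.1 (1:ℝ))‖ * ‖(EuclideanSpace.single p.2 (1:ℝ))‖ :=
            (L _).le_opNorm _
        _ ≤ ‖L‖ * ‖(EuclideanSpace.single p.1 (1:ℝ))‖ * ‖(EuclideanSpace.single p.2 (1:ℝ))‖ := by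
            gcongr; exact L.le_opNorm _
        _ = ‖L‖ := by simp
    calc ‖M p‖ * ‖L (EuclideanSpace.single p.1 1) (EuclideanSpace.single p.2 1)‖
        ≤ ‖M‖ * ‖L‖ :=
          mul_le_mul (coord_le_norm M p) h1 (norm_nonneg _) (norm_nonneg _)
      _ = ‖L‖ * ‖M‖ := mul_comm _ _
  calc ‖bapp L M‖
      ≤ ∑ p : Fin r × Fin r,
          ‖M p • L (EuclideanSpace.single p.1 1) (EuclideanSpace.single p.2 1)‖ :=
        norm_sum_le _ _
    _ ≤ ∑ _p : Fin r × Fin r, ‖L‖ * ‖M‖ := Finset.sum_le_sum (fun p _ => h p)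
    _ = (r:ℝ)^2 * ‖L‖ * ‖M‖ := by
        simp [Finset.sum_const, Fintype.card_prod, mul_assoc]; ring

lemma bapp_tens {r d : ℕ}
    (L : EuclideanSpace ℝ (Fin r) →L[ℝ] EuclideanSpace ℝ (Fin r) →L[ℝ] Ed d)
    (x y : EuclideanSpace ℝ (Fin r)) : bapp L (tens x y) = L x y := by
  have hx : x = ∑ i : Fin r, x i • EuclideanSpace.single i (1:ℝ) := by
    simpa [EuclideanSpace.basisFun_apply, EuclideanSpace.basisFun_repr] using
      ((EuclideanSpace.basisFun (Fin r) ℝ).sum_repr x).symm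
  have hy : y = ∑ j : Fin r, y j • EuclideanSpace.single j (1:ℝ) := by
    simpa [EuclideanSpace.basisFun_apply, EuclideanSpace.basisFun_repr] using
      ((EuclideanSpace.basisFun (Fin r) ℝ).sum_repr y).symm
  conv_rhs => rw [hx, hy]
  rw [map_sum]
  simp only [_root_.map_smul, ContinuousLinearMap.coe_sum', ContinuousLinearMap.coe_smul',
    Finset.sum_apply, Pi.smul_apply, map_sum]
  rw [bapp, ← Finset.univ_product_univ, Finset.sum_product]
  rw [Finset.sum_comm]
  apply Finset.sum_congr rfl
  intro j _
  rw [Finset.smul_sum]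
  apply Finset.sum_congr rfl
  intro i _
  have : tens x y (i, j) = x i * y j := by
    simp [tens]
  rw [this, mul_comm, mul_smul, smul_comm (y j) (x i)]

lemma fderiv_norm_le_iterated {E F : Type*} [NormedAddCommGroup E] [NormedSpace ℝ E]
    [NormedAddCommGroup F] [NormedSpace ℝ F] (g : E → F) (x : E) :
    ‖fderiv ℝ g x‖ ≤ ‖iteratedFDeriv ℝ 1 g x‖ := by
  apply ContinuousLinearMap.opNorm_le_bound _ (norm_nonneg _)
  intro v
  have h : fderiv ℝ g x v = iteratedFDeriv ℝ 1 g x (fun _ => v) := by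
    rw [iteratedFDeriv_one_apply]
  rw [h]
  calc ‖iteratedFDeriv ℝ 1 g x (fun _ => v)‖
      ≤ ‖iteratedFDeriv ℝ 1 g x‖ * ∏ _i : Fin 1, ‖v‖ :=
        (iteratedFDeriv ℝ 1 g x).le_opNorm _
    _ = ‖iteratedFDeriv ℝ 1 g x‖ * ‖v‖ := by simp

lemma taylor_two {E F : Type*} [NormedAddCommGroup E] [NormedSpace ℝ E]
    [NormedAddCommGroup F] [NormedSpace ℝ F] {σ : E → F} (hσ : ContDiff ℝ 3 σ) {M₂ : ℝ}
    (hM₂ : ∀ x, ‖iteratedFDeriv ℝ 2 σ x‖ ≤ M₂) (a c : E) :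
    ‖σ c - σ a - fderiv ℝ σ a (c - a)‖ ≤ M₂ * ‖c - a‖ * ‖c - a‖ := by
  have hd1 : Differentiable ℝ σ := hσ.differentiable (by norm_num)
  have hd2 : Differentiable ℝ (fderiv ℝ σ) := by
    have : ContDiff ℝ 2 (fderiv ℝ σ) := hσ.fderiv_right (by norm_num)
    exact this.differentiable (by norm_num)
  have hlip : ∀ z w : E, ‖fderiv ℝ σ z - fderiv ℝ σ w‖ ≤ M₂ * ‖z - w‖ := by
    intro z w
    apply Convex.norm_image_sub_le_of_norm_fderiv_le (fun x _ => hd2 x)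
      (fun x _ => ?_) convex_univ (Set.mem_univ w) (Set.mem_univ z)
    calc ‖fderiv ℝ (fderiv ℝ σ) x‖ ≤ ‖iteratedFDeriv ℝ 1 (fderiv ℝ σ) x‖ :=
          fderiv_norm_le_iterated _ _
      _ = ‖iteratedFDeriv ℝ 2 σ x‖ := norm_iteratedFDeriv_fderiv
      _ ≤ M₂ := hM₂ x
  have := Convex.norm_image_sub_le_of_norm_fderiv_le' (f := σ) (φ := fderiv ℝ σ a)
    (C := M₂ * ‖c - a‖) (s := Metric.closedBall a ‖c - a‖) (x := a) (y := c)
    (fun x _ => hd1 x)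
    (fun x hx => by
      calc ‖fderiv ℝ σ x - fderiv ℝ σ a‖ ≤ M₂ * ‖x - a‖ := hlip x a
        _ ≤ M₂ * ‖c - a‖ := by
            have h0 : (0:ℝ) ≤ M₂ := le_trans (norm_nonneg _) (hM₂ a)
            have : ‖x - a‖ ≤ ‖c - a‖ := by
              simpa [dist_eq_norm] using Metric.mem_closedBall.mp hx
            exact mul_le_mul_of_nonneg_left this h0)
    (convex_closedBall a ‖c - a‖)
    (Metric.mem_closedBall_self (norm_nonneg _))
    (by simp [Metric.mem_closedBall, dist_eq_norm])
  linarith [this]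

lemma RsX_eq {r d : ℕ} (ε : ℝ) (σ : Ed d → (Ed r →L[ℝ] Ed d)) (B : ℝ → Ed r) (X : ℝ → Ed d)
    (u v : ℝ) :
    RsX ε σ B X u v = (σ (X v) - σ (X u) - fderiv ℝ σ (X u) (X v - X u))
      + (fderiv ℝ σ (X u)) (RX ε σ B X u v) := by
  simp only [RsX, RX, _root_.map_sub, _root_.map_smul]
  abel

lemma tens_neg_neg {r : ℕ} (x : EuclideanSpace ℝ (Fin r)) : tens x (-x) = - tens x x := by
  ext p
  simp [tens]

lemma RX_rev {r d : ℕ} (ε : ℝ) (σ : Ed d → (Ed r →L[ℝ] Ed d)) (B : ℝ → Ed r) (X : ℝ → Ed d)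
    (u v : ℝ) :
    RX ε σ B X u v = -(RX ε σ B X v u) + ε • ((RsX ε σ B X v u) (B u - B v))
      + (ε^2) • (((fderiv ℝ σ (X v)).comp (σ (X v))) (B u - B v)) (B u - B v) := by
  have h1 : (σ (X u)) (B v - B u) = -((σ (X u)) (B u - B v)) := by
    rw [show B v - B u = -(B u - B v) by abel, _root_.map_neg]
  simp only [RX, RsX, ContinuousLinearMap.sub_apply, ContinuousLinearMap.smul_apply,
    ContinuousLinearMap.coe_comp', Function.comp_apply, pow_two, mul_smul, smul_sub, h1,
    smul_neg]
  abel

set_option maxHeartbeats 2000000 in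
/-- inequality (Rh) of the paper: under the Davie-type
solution hypotheses there is a constant `M > 0` depending only on `K`, `c₂`,
`sup‖σ‖ ≤ M₀` and `sup‖Dσ‖ ≤ M₁` (and the fixed exponent `α`), independent of
`ε`, `T` and `(B,𝔹)`, such that for all `0 ≤ s ≤ t ≤ T`,
`‖R^X‖_{2α,[s,t]} ≤ M[(1 + sup_{[0,T]}|X|)(t−s)^{1−2α} + ‖𝔹‖_{2α,[0,T]}
  + (‖B‖_{α,[0,T]}‖R^{σ(X)}‖_{2α,[s,t]} + ‖𝔹‖_{2α,[0,T]}‖X‖_{α,[s,t]})(t−s)^α]`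
(stated as the equivalent pointwise bound on `[s,t]`). -/
theorem statement4 (d r : ℕ) (α K c₂ M₀ M₁ : ℝ)
    (hα : α ∈ Set.Ioo (1/3 : ℝ) (1/2)) (hK : 0 ≤ K) :
    ∃ M > (0:ℝ),
      ∀ (c₁ M₂ M₃ T : ℝ), 0 < T →
      ∀ ε : ℝ, ε ∈ Set.Ioc (0:ℝ) 1 →
      ∀ b : Ed d → Ed d,
        (∀ x y, ‖b x - b y‖ ≤ c₁ * ‖x - y‖) →
        (∀ x, ‖b x‖ ≤ c₂ * (1 + ‖x‖)) →
      ∀ σ : Ed d → (Ed r →L[ℝ] Ed d), ContDiff ℝ 3 σ →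
        (∀ x, ‖σ x‖ ≤ M₀) →
        (∀ x, ‖fderiv ℝ σ x‖ ≤ M₁) →
        (∀ x, ‖iteratedFDeriv ℝ 2 σ x‖ ≤ M₂) →
        (∀ x, ‖iteratedFDeriv ℝ 3 σ x‖ ≤ M₃) →
      ∀ (B : ℝ → Ed r) (𝔹 : ℝ → ℝ → EuclideanSpace ℝ (Fin r × Fin r)),
        BddAbove (pairSet α 0 T (incr B)) →
        BddAbove (pairSet (2*α) 0 T 𝔹) →
        Chen T B 𝔹 →
      ∀ X : ℝ → Ed d, Continuous X →
        BddAbove (pairSet α 0 T (incr X)) →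
        BddAbove (pairSet (2*α) 0 T (RX ε σ B X)) →
        DavieSol T α ε K b σ B 𝔹 X →
        ∀ s t : ℝ, 0 ≤ s → s ≤ t → t ≤ T →
          ∀ u ∈ Set.Icc s t, ∀ v ∈ Set.Icc s t,
            ‖RX ε σ B X u v‖ ≤
              M * ((1 + sSup ((fun w => ‖X w‖) '' Set.Icc (0:ℝ) T)) * (t - s) ^ (1 - 2*α)
                    + pSup (2*α) 0 T 𝔹
                    + (pSup α 0 T (incr B) * pSup (2*α) s t (RsX ε σ B X)
                        + pSup (2*α) 0 T 𝔹 * pSup α s t (incr X)) * (t - s) ^ α)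
                * |v - u| ^ (2*α) := by
  obtain ⟨hα1, hα2⟩ := hα
  have hαpos : (0:ℝ) < α := by linarith
  have h2α : (0:ℝ) < 2*α := by linarith
  refine ⟨1 + K + max c₂ 0 + 3 * (r:ℝ)^2 * max M₀ 0 * max M₁ 0, ?_, ?_⟩
  · have h1 : (0:ℝ) ≤ max c₂ 0 := le_max_right _ _
    have h2 : (0:ℝ) ≤ 3 * (r:ℝ)^2 * max M₀ 0 * max M₁ 0 := by positivity
    linarith
  intro c₁ M₂ M₃ T hT ε hε b hbl hbg σ hσ hM₀ hM₁ hM₂ hM₃ B 𝔹 hBB hBB2 hChen X hXc hXB hRXB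
    hDavie s t hs0 hst htT u hu v hv
  set M : ℝ := 1 + K + max c₂ 0 + 3 * (r:ℝ)^2 * max M₀ 0 * max M₁ 0 with hMdef
  -- basic nonnegativity facts
  have hc₂0 : 0 ≤ c₂ := le_trans (norm_nonneg (b 0)) (by simpa using hbg 0)
  have hM₀0 : 0 ≤ M₀ := le_trans (norm_nonneg _) (hM₀ 0)
  have hM₁0 : 0 ≤ M₁ := le_trans (ContinuousLinearMap.opNorm_nonneg _) (hM₁ 0)
  have hM₂0 : 0 ≤ M₂ := le_trans (norm_nonneg _) (hM₂ 0)
  have hεpos : 0 < ε := hε.1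
  have hε1 : ε ≤ 1 := hε.2
  have hε2 : ε^2 ≤ 1 := by rw [sq]; exact mul_le_one₀ hε1 (le_of_lt hεpos) hε1
  have hprod0 : 0 ≤ (r:ℝ)^2 * M₀ * M₁ := by
    have : (0:ℝ) ≤ (r:ℝ)^2 := by positivity
    exact mul_nonneg (mul_nonneg this hM₀0) hM₁0
  have hKM : K + 1 ≤ M := by
    have h1 : (0:ℝ) ≤ max c₂ 0 := le_max_right _ _
    have h2 : (0:ℝ) ≤ 3 * (r:ℝ)^2 * max M₀ 0 * max M₁ 0 := by positivity
    rw [hMdef]; linarith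
  have hc₂M : c₂ ≤ M := by
    have h2 : (0:ℝ) ≤ 3 * (r:ℝ)^2 * max M₀ 0 * max M₁ 0 := by positivity
    rw [hMdef, max_eq_left hc₂0]; linarith
  have h3M : 3 * ((r:ℝ)^2 * M₀ * M₁) ≤ M := by
    have h1 : (0:ℝ) ≤ max c₂ 0 := le_max_right _ _
    rw [hMdef, max_eq_left hM₀0, max_eq_left hM₁0]; linarith
  have h1M : (r:ℝ)^2 * M₀ * M₁ ≤ M := by linarith only [h3M, hprod0]
  -- interval inclusions
  have hst0T : Set.Icc s t ⊆ Set.Icc (0:ℝ) T := Set.Icc_subset_Icc hs0 htT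
  have hu0T : u ∈ Set.Icc (0:ℝ) T := hst0T hu
  have hv0T : v ∈ Set.Icc (0:ℝ) T := hst0T hv
  -- the sup of ‖X‖
  set S := sSup ((fun w => ‖X w‖) '' Set.Icc (0:ℝ) T) with hSdef
  have hSb : ∀ w ∈ Set.Icc (0:ℝ) T, ‖X w‖ ≤ S := by
    intro w hw
    exact le_csSup (isCompact_Icc.bddAbove_image (continuous_norm.comp hXc).continuousOn)
      ⟨w, hw, rfl⟩
  have hS0 : 0 ≤ S := by
    apply Real.sSup_nonneg
    rintro x ⟨w, _, rfl⟩
    exact norm_nonneg _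
  -- abbreviations
  set CB := pSup α 0 T (incr B) with hCBdef
  set C𝔹 := pSup (2*α) 0 T 𝔹 with hCBBdef
  set CXst := pSup α s t (incr X) with hCXstdef
  set CRs := pSup (2*α) s t (RsX ε σ B X) with hCRsdef
  set CX := pSup α 0 T (incr X) with hCXdef
  set CR := pSup (2*α) 0 T (RX ε σ B X) with hCRdef
  have hCB0 : 0 ≤ CB := pSup_nonneg _ _ _ _
  have hCBB0 : 0 ≤ C𝔹 := pSup_nonneg _ _ _ _
  have hCXst0 : 0 ≤ CXst := pSup_nonneg _ _ _ _
  have hCRs0 : 0 ≤ CRs := pSup_nonneg _ _ _ _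
  have hCX0 : 0 ≤ CX := pSup_nonneg _ _ _ _
  have hCR0 : 0 ≤ CR := pSup_nonneg _ _ _ _
  have hXBst : BddAbove (pairSet α s t (incr X)) := hXB.mono (pairSet_mono hst0T)
  -- the three bracket terms
  set G₁ := (1 + S) * (t - s) ^ (1 - 2*α) with hG₁def
  set G₃ := (CB * CRs + C𝔹 * CXst) * (t - s) ^ α with hG₃def
  have hts0 : 0 ≤ t - s := sub_nonneg.mpr hst
  have hG₁0 : 0 ≤ G₁ := mul_nonneg (by linarith only [hS0]) (Real.rpow_nonneg hts0 _)
  have hG₃0 : 0 ≤ G₃ :=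
    mul_nonneg (add_nonneg (mul_nonneg hCB0 hCRs0) (mul_nonneg hCBB0 hCXst0))
      (Real.rpow_nonneg hts0 _)
  -- pointwise bound for RsX, giving boundedness of its pair set
  have hRsptwise : ∀ p q : ℝ, p ∈ Set.Icc (0:ℝ) T → q ∈ Set.Icc (0:ℝ) T → p ≠ q →
      ‖RsX ε σ B X p q‖ ≤ (M₂ * CX^2 + M₁ * CR) * |q - p| ^ (2*α) := by
    intro p q hp hq hpq
    have hXpq : ‖X q - X p‖ ≤ CX * |q - p| ^ α := le_pSup hXB hp hq hpq
    have hRXpq : ‖RX ε σ B X p q‖ ≤ CR * |q - p| ^ (2*α) := le_pSup hRXB hp hq hpq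
    have habs2 : |q - p| ^ α * |q - p| ^ α = |q - p| ^ (2*α) := by
      rw [← Real.rpow_add (abs_pos.mpr (sub_ne_zero.mpr (Ne.symm hpq)))]
      ring_nf
    rw [RsX_eq]
    calc ‖(σ (X q) - σ (X p) - fderiv ℝ σ (X p) (X q - X p))
            + (fderiv ℝ σ (X p)) (RX ε σ B X p q)‖
        ≤ ‖σ (X q) - σ (X p) - fderiv ℝ σ (X p) (X q - X p)‖
            + ‖(fderiv ℝ σ (X p)) (RX ε σ B X p q)‖ := norm_add_le _ _
      _ ≤ M₂ * ‖X q - X p‖ * ‖X q - X p‖ + M₁ * ‖RX ε σ B X p q‖ := by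
          apply add_le_add (taylor_two hσ hM₂ (X p) (X q))
          calc ‖(fderiv ℝ σ (X p)) (RX ε σ B X p q)‖
              ≤ ‖fderiv ℝ σ (X p)‖ * ‖RX ε σ B X p q‖ :=
                ContinuousLinearMap.le_opNorm _ _
            _ ≤ M₁ * ‖RX ε σ B X p q‖ :=
                mul_le_mul_of_nonneg_right (hM₁ _) (norm_nonneg _)
      _ ≤ M₂ * (CX * |q - p| ^ α) * (CX * |q - p| ^ α) + M₁ * (CR * |q - p| ^ (2*α)) := by
          have hw : (0:ℝ) ≤ CX * |q - p| ^ α :=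
            mul_nonneg hCX0 (Real.rpow_nonneg (abs_nonneg _) _)
          exact add_le_add
            (mul_le_mul (mul_le_mul_of_nonneg_left hXpq hM₂0) hXpq (norm_nonneg _)
              (mul_nonneg hM₂0 hw))
            (mul_le_mul_of_nonneg_left hRXpq hM₁0)
      _ = (M₂ * CX^2 + M₁ * CR) * |q - p| ^ (2*α) := by
          rw [← habs2]; ring
  have hRsXB : BddAbove (pairSet (2*α) s t (RsX ε σ B X)) := by
    refine ⟨M₂ * CX^2 + M₁ * CR, ?_⟩
    rintro x ⟨p, q, hp, hq, rfl⟩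
    by_cases hpq : p = q
    · subst hpq
      simp only [sub_self, abs_zero, Real.zero_rpow (ne_of_gt h2α), div_zero]
      exact add_nonneg (mul_nonneg hM₂0 (by positivity)) (mul_nonneg hM₁0 hCR0)
    · have h := hRsptwise p q (hst0T hp) (hst0T hq) hpq
      have hpos : (0:ℝ) < |q - p| ^ (2*α) :=
        Real.rpow_pos_of_pos (abs_pos.mpr (sub_ne_zero.mpr (Ne.symm hpq))) _
      rw [div_le_iff₀ hpos]
      exact h
  -- the key forward bound
  have key : ∀ p q : ℝ, p ∈ Set.Icc s t → q ∈ Set.Icc s t → p < q →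
      ‖RX ε σ B X p q‖ ≤
        (K * G₃ + c₂ * G₁ + (r:ℝ)^2 * M₀ * M₁ * C𝔹) * |q - p| ^ (2*α) := by
    intro p q hp hq hpq
    have hqp0 : 0 < q - p := sub_pos.mpr hpq
    have habs : |q - p| = q - p := abs_of_pos hqp0
    have hqpts : q - p ≤ t - s := by
      linarith only [hp.1, hq.2]
    have hsubpq : Set.Icc p q ⊆ Set.Icc s t := Set.Icc_subset_Icc hp.1 hq.2
    have hsubpq0T : Set.Icc p q ⊆ Set.Icc (0:ℝ) T := fun x hx => hst0T (hsubpq hx)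
    have hp0T : p ∈ Set.Icc (0:ℝ) T := hst0T hp
    have hq0T : q ∈ Set.Icc (0:ℝ) T := hst0T hq
    have hD := hDavie p q (hp0T.1) (le_of_lt hpq) (hq0T.2)
    have hid : RX ε σ B X p q =
        (X q - X p - (∫ w in p..q, b (X w)) - ε • (σ (X p)) (B q - B p)
          - (ε^2) • bapp ((fderiv ℝ σ (X p)).comp (σ (X p))) (𝔹 p q))
        + (∫ w in p..q, b (X w))
        + (ε^2) • bapp ((fderiv ℝ σ (X p)).comp (σ (X p))) (𝔹 p q) := by
      simp only [RX]; abel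
    -- term 1 : Davie estimate
    have e1 : pSup α p q (incr B) ≤ CB := pSup_mono hBB (le_of_lt hpq) hsubpq0T
    have e2 : pSup (2*α) p q (RsX ε σ B X) ≤ CRs := pSup_mono hRsXB (le_of_lt hpq) hsubpq
    have e3 : pSup (2*α) p q 𝔹 ≤ C𝔹 := pSup_mono hBB2 (le_of_lt hpq) hsubpq0T
    have e4 : pSup α p q (incr X) ≤ CXst := pSup_mono hXBst (le_of_lt hpq) hsubpq
    have hsplit : (q - p) ^ (3*α) = (q - p) ^ α * (q - p) ^ (2*α) := by
      rw [← Real.rpow_add hqp0]; ring_nf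
    have hmidα : (q - p) ^ α ≤ (t - s) ^ α :=
      Real.rpow_le_rpow (le_of_lt hqp0) hqpts (le_of_lt hαpos)
    have hterm1 : ‖X q - X p - (∫ w in p..q, b (X w)) - ε • (σ (X p)) (B q - B p)
          - (ε^2) • bapp ((fderiv ℝ σ (X p)).comp (σ (X p))) (𝔹 p q)‖
        ≤ K * G₃ * (q - p) ^ (2*α) := by
      calc ‖X q - X p - (∫ w in p..q, b (X w)) - ε • (σ (X p)) (B q - B p)
            - (ε^2) • bapp ((fderiv ℝ σ (X p)).comp (σ (X p))) (𝔹 p q)‖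
          ≤ K * (pSup α p q (incr B) * pSup (2*α) p q (RsX ε σ B X)
              + pSup (2*α) p q 𝔹 * pSup α p q (incr X)) * (q - p) ^ (3*α) := hD
        _ ≤ K * (CB * CRs + C𝔹 * CXst) * (q - p) ^ (3*α) := by
            apply mul_le_mul_of_nonneg_right _ (Real.rpow_nonneg (le_of_lt hqp0) _)
            apply mul_le_mul_of_nonneg_left _ hK
            exact add_le_add
              (mul_le_mul e1 e2 (pSup_nonneg _ _ _ _) hCB0)
              (mul_le_mul e3 e4 (pSup_nonneg _ _ _ _) hCBB0)
        _ = K * (CB * CRs + C𝔹 * CXst) * ((q - p) ^ α * (q - p) ^ (2*α)) := by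
            rw [hsplit]
        _ ≤ K * (CB * CRs + C𝔹 * CXst) * ((t - s) ^ α * (q - p) ^ (2*α)) := by
            apply mul_le_mul_of_nonneg_left
              (mul_le_mul_of_nonneg_right hmidα (Real.rpow_nonneg (le_of_lt hqp0) _))
            exact mul_nonneg hK (add_nonneg (mul_nonneg hCB0 hCRs0) (mul_nonneg hCBB0 hCXst0))
        _ = K * G₃ * (q - p) ^ (2*α) := by rw [hG₃def]; ring
    -- term 2 : drift integral
    have hterm2 : ‖∫ w in p..q, b (X w)‖ ≤ c₂ * G₁ * (q - p) ^ (2*α) := by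
      have hint : ‖∫ w in p..q, b (X w)‖ ≤ c₂ * (1 + S) * |q - p| := by
        apply intervalIntegral.norm_integral_le_of_norm_le_const
        intro x hx
        rw [Set.uIoc_of_le (le_of_lt hpq)] at hx
        have hx0T : x ∈ Set.Icc (0:ℝ) T := hsubpq0T ⟨le_of_lt hx.1, hx.2⟩
        calc ‖b (X x)‖ ≤ c₂ * (1 + ‖X x‖) := hbg _
          _ ≤ c₂ * (1 + S) := by
              have h := hSb x hx0T
              exact mul_le_mul_of_nonneg_left (by linarith only [h]) hc₂0
      have hqp1 : q - p = (q - p) ^ (1 - 2*α) * (q - p) ^ (2*α) := by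
        rw [← Real.rpow_add hqp0]
        norm_num
      have h12α : (0:ℝ) ≤ 1 - 2*α := by linarith only [hα2]
      have hmid : (q - p) ^ (1 - 2*α) ≤ (t - s) ^ (1 - 2*α) :=
        Real.rpow_le_rpow (le_of_lt hqp0) hqpts h12α
      calc ‖∫ w in p..q, b (X w)‖ ≤ c₂ * (1 + S) * |q - p| := hint
        _ = c₂ * (1 + S) * ((q - p) ^ (1 - 2*α) * (q - p) ^ (2*α)) := by
            rw [habs, ← hqp1]
        _ ≤ c₂ * (1 + S) * ((t - s) ^ (1 - 2*α) * (q - p) ^ (2*α)) := by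
            apply mul_le_mul_of_nonneg_left
              (mul_le_mul_of_nonneg_right hmid (Real.rpow_nonneg (le_of_lt hqp0) _))
            exact mul_nonneg hc₂0 (by linarith only [hS0])
        _ = c₂ * G₁ * (q - p) ^ (2*α) := by rw [hG₁def]; ring
    -- term 3 : second level of the rough path
    have hLnorm : ‖(fderiv ℝ σ (X p)).comp (σ (X p))‖ ≤ M₁ * M₀ :=
      le_trans (ContinuousLinearMap.opNorm_comp_le _ _)
        (mul_le_mul (hM₁ _) (hM₀ _) (norm_nonneg _) hM₁0)
    have h𝔹pq : ‖𝔹 p q‖ ≤ C𝔹 * |q - p| ^ (2*α) := le_pSup hBB2 hp0T hq0T (ne_of_lt hpq)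
    have hterm3 : ‖(ε^2) • bapp ((fderiv ℝ σ (X p)).comp (σ (X p))) (𝔹 p q)‖
        ≤ (r:ℝ)^2 * M₀ * M₁ * C𝔹 * (q - p) ^ (2*α) := by
      rw [norm_smul]
      calc ‖(ε^2 : ℝ)‖ * ‖bapp ((fderiv ℝ σ (X p)).comp (σ (X p))) (𝔹 p q)‖
          ≤ 1 * ((r:ℝ)^2 * ‖(fderiv ℝ σ (X p)).comp (σ (X p))‖ * ‖𝔹 p q‖) := by
            apply mul_le_mul _ (bapp_norm_le _ _) (norm_nonneg _) (by norm_num)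
            rw [Real.norm_eq_abs, abs_of_nonneg (by positivity : (0:ℝ) ≤ ε^2)]
            exact hε2
        _ ≤ 1 * ((r:ℝ)^2 * (M₁ * M₀) * (C𝔹 * |q - p| ^ (2*α))) := by
            apply mul_le_mul_of_nonneg_left _ zero_le_one
            have hr2 : (0:ℝ) ≤ (r:ℝ)^2 := by positivity
            exact mul_le_mul (mul_le_mul_of_nonneg_left hLnorm hr2) h𝔹pq (norm_nonneg _)
              (mul_nonneg hr2 (mul_nonneg hM₁0 hM₀0))
        _ = (r:ℝ)^2 * M₀ * M₁ * C𝔹 * (q - p) ^ (2*α) := by rw [habs]; ring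
    rw [hid, habs]
    calc ‖(X q - X p - (∫ w in p..q, b (X w)) - ε • (σ (X p)) (B q - B p)
          - (ε^2) • bapp ((fderiv ℝ σ (X p)).comp (σ (X p))) (𝔹 p q))
        + (∫ w in p..q, b (X w))
        + (ε^2) • bapp ((fderiv ℝ σ (X p)).comp (σ (X p))) (𝔹 p q)‖
        ≤ ‖(X q - X p - (∫ w in p..q, b (X w)) - ε • (σ (X p)) (B q - B p)
            - (ε^2) • bapp ((fderiv ℝ σ (X p)).comp (σ (X p))) (𝔹 p q))
          + (∫ w in p..q, b (X w))‖
          + ‖(ε^2) • bapp ((fderiv ℝ σ (X p)).comp (σ (X p))) (𝔹 p q)‖ := norm_add_le _ _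
      _ ≤ ‖X q - X p - (∫ w in p..q, b (X w)) - ε • (σ (X p)) (B q - B p)
            - (ε^2) • bapp ((fderiv ℝ σ (X p)).comp (σ (X p))) (𝔹 p q)‖
          + ‖∫ w in p..q, b (X w)‖
          + ‖(ε^2) • bapp ((fderiv ℝ σ (X p)).comp (σ (X p))) (𝔹 p q)‖ :=
            add_le_add_left (norm_add_le _ _) _
      _ ≤ K * G₃ * (q - p) ^ (2*α) + c₂ * G₁ * (q - p) ^ (2*α)
          + (r:ℝ)^2 * M₀ * M₁ * C𝔹 * (q - p) ^ (2*α) :=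
            add_le_add (add_le_add hterm1 hterm2) hterm3
      _ = (K * G₃ + c₂ * G₁ + (r:ℝ)^2 * M₀ * M₁ * C𝔹) * (q - p) ^ (2*α) := by ring
  -- final assembly
  have hw0 : (0:ℝ) ≤ |v - u| ^ (2*α) := Real.rpow_nonneg (abs_nonneg _) _
  rcases lt_trichotomy u v with h | h | h
  · -- u < v : forward case
    have hkey := key u v hu hv h
    calc ‖RX ε σ B X u v‖
        ≤ (K * G₃ + c₂ * G₁ + (r:ℝ)^2 * M₀ * M₁ * C𝔹) * |v - u| ^ (2*α) := hkey
      _ ≤ M * (G₁ + C𝔹 + G₃) * |v - u| ^ (2*α) := by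
          apply mul_le_mul_of_nonneg_right _ hw0
          have h1 : K * G₃ ≤ M * G₃ := mul_le_mul_of_nonneg_right (by linarith only [hKM]) hG₃0
          have h2 : c₂ * G₁ ≤ M * G₁ := mul_le_mul_of_nonneg_right hc₂M hG₁0
          have h3 : (r:ℝ)^2 * M₀ * M₁ * C𝔹 ≤ M * C𝔹 :=
            mul_le_mul_of_nonneg_right h1M hCBB0
          linarith only [h1, h2, h3]
  · -- u = v
    subst h
    simp only [RX, sub_self, smul_zero, map_zero, norm_zero, abs_zero,
      Real.zero_rpow (ne_of_gt h2α), mul_zero]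
    exact le_refl 0
  · -- v < u : reverse case
    have hkey := key v u hv hu h
    have huv0 : 0 < u - v := sub_pos.mpr h
    have habs : |u - v| = u - v := abs_of_pos huv0
    have habs' : |v - u| = |u - v| := abs_sub_comm v u
    have huvts : u - v ≤ t - s := by
      linarith only [hv.1, hu.2]
    -- Chen relations
    have hdiag : 𝔹 v v = 0 := by
      have hh := hChen v hv0T v hv0T v hv0T
      have h0 : tens (B v - B v) (B v - B v) = 0 := by
        ext p
        simp [tens]
      rw [h0] at hh
      have : -𝔹 v v = 0 := by rw [← hh]; abel
      exact neg_eq_zero.mp this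
    have hsym : tens (B u - B v) (B u - B v) = 𝔹 v u + 𝔹 u v := by
      have hh := hChen v hv0T u hu0T v hv0T
      rw [hdiag] at hh
      have h2 : tens (B u - B v) (B v - B u) = - tens (B u - B v) (B u - B v) := by
        rw [show B v - B u = -(B u - B v) by abel]
        exact tens_neg_neg _
      rw [h2] at hh
      apply neg_injective
      rw [← hh]; abel
    have hcomp : (((fderiv ℝ σ (X v)).comp (σ (X v))) (B u - B v)) (B u - B v)
        = bapp ((fderiv ℝ σ (X v)).comp (σ (X v))) (𝔹 v u + 𝔹 u v) := by
      rw [← hsym, bapp_tens]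
    -- bound the middle term
    have hRsvu : ‖RsX ε σ B X v u‖ ≤ CRs * |u - v| ^ (2*α) :=
      le_pSup hRsXB hv hu (ne_of_lt h)
    have hBvu : ‖B u - B v‖ ≤ CB * |u - v| ^ α := le_pSup hBB hv0T hu0T (ne_of_lt h)
    have hmidα : (u - v) ^ α ≤ (t - s) ^ α :=
      Real.rpow_le_rpow (le_of_lt huv0) huvts (le_of_lt hαpos)
    have hmid : ‖ε • ((RsX ε σ B X v u) (B u - B v))‖ ≤ G₃ * |u - v| ^ (2*α) := by
      rw [norm_smul]
      calc ‖ε‖ * ‖(RsX ε σ B X v u) (B u - B v)‖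
          ≤ 1 * (‖RsX ε σ B X v u‖ * ‖B u - B v‖) := by
            apply mul_le_mul _ (ContinuousLinearMap.le_opNorm _ _) (norm_nonneg _) (by norm_num)
            rw [Real.norm_eq_abs, abs_of_pos hεpos]; exact hε1
        _ ≤ 1 * ((CRs * |u - v| ^ (2*α)) * (CB * |u - v| ^ α)) := by
            apply mul_le_mul_of_nonneg_left _ zero_le_one
            exact mul_le_mul hRsvu hBvu (norm_nonneg _)
              (mul_nonneg hCRs0 (Real.rpow_nonneg (abs_nonneg _) _))
        _ = CRs * CB * |u - v| ^ α * |u - v| ^ (2*α) := by ring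
        _ ≤ CRs * CB * (t - s) ^ α * |u - v| ^ (2*α) := by
            rw [habs]
            gcongr
        _ ≤ G₃ * |u - v| ^ (2*α) := by
            rw [hG₃def]
            apply mul_le_mul_of_nonneg_right _ (Real.rpow_nonneg (abs_nonneg _) _)
            calc CRs * CB * (t - s) ^ α = CB * CRs * (t - s) ^ α := by ring
              _ ≤ (CB * CRs + C𝔹 * CXst) * (t - s) ^ α := by
                  apply mul_le_mul_of_nonneg_right _ (Real.rpow_nonneg hts0 _)
                  have h4 : 0 ≤ C𝔹 * CXst := mul_nonneg hCBB0 hCXst0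
                  linarith only [h4]
    -- bound the bapp term
    have hLnorm : ‖(fderiv ℝ σ (X v)).comp (σ (X v))‖ ≤ M₁ * M₀ :=
      le_trans (ContinuousLinearMap.opNorm_comp_le _ _)
        (mul_le_mul (hM₁ _) (hM₀ _) (norm_nonneg _) hM₁0)
    have h𝔹vu : ‖𝔹 v u‖ ≤ C𝔹 * |u - v| ^ (2*α) := le_pSup hBB2 hv0T hu0T (ne_of_lt h)
    have h𝔹uv : ‖𝔹 u v‖ ≤ C𝔹 * |u - v| ^ (2*α) := by
      have := le_pSup hBB2 hu0T hv0T (ne_of_gt h)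
      rwa [habs'] at this
    have hbig : ‖(ε^2) • (((fderiv ℝ σ (X v)).comp (σ (X v))) (B u - B v)) (B u - B v)‖
        ≤ 2 * ((r:ℝ)^2 * M₀ * M₁) * C𝔹 * |u - v| ^ (2*α) := by
      rw [hcomp, norm_smul]
      calc ‖(ε^2 : ℝ)‖ * ‖bapp ((fderiv ℝ σ (X v)).comp (σ (X v))) (𝔹 v u + 𝔹 u v)‖
          ≤ 1 * ((r:ℝ)^2 * ‖(fderiv ℝ σ (X v)).comp (σ (X v))‖ * ‖𝔹 v u + 𝔹 u v‖) := by
            apply mul_le_mul _ (bapp_norm_le _ _) (norm_nonneg _) (by norm_num)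
            rw [Real.norm_eq_abs, abs_of_nonneg (by positivity : (0:ℝ) ≤ ε^2)]
            exact hε2
        _ ≤ 1 * ((r:ℝ)^2 * (M₁ * M₀) *
              (C𝔹 * |u - v| ^ (2*α) + C𝔹 * |u - v| ^ (2*α))) := by
            apply mul_le_mul_of_nonneg_left _ zero_le_one
            have hr2 : (0:ℝ) ≤ (r:ℝ)^2 := by positivity
            exact mul_le_mul (mul_le_mul_of_nonneg_left hLnorm hr2)
              (le_trans (norm_add_le _ _) (add_le_add h𝔹vu h𝔹uv)) (norm_nonneg _)
              (mul_nonneg hr2 (mul_nonneg hM₁0 hM₀0))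
        _ = 2 * ((r:ℝ)^2 * M₀ * M₁) * C𝔹 * |u - v| ^ (2*α) := by ring
    -- assemble
    rw [RX_rev ε σ B X u v, habs']
    have hw0' : (0:ℝ) ≤ |u - v| ^ (2*α) := Real.rpow_nonneg (abs_nonneg _) _
    calc ‖-(RX ε σ B X v u) + ε • ((RsX ε σ B X v u) (B u - B v))
          + (ε^2) • (((fderiv ℝ σ (X v)).comp (σ (X v))) (B u - B v)) (B u - B v)‖
        ≤ ‖RX ε σ B X v u‖ + ‖ε • ((RsX ε σ B X v u) (B u - B v))‖
          + ‖(ε^2) • (((fderiv ℝ σ (X v)).comp (σ (X v))) (B u - B v)) (B u - B v)‖ := by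
          refine le_trans (norm_add₃_le) ?_
          rw [norm_neg]
      _ ≤ (K * G₃ + c₂ * G₁ + (r:ℝ)^2 * M₀ * M₁ * C𝔹) * |u - v| ^ (2*α)
          + G₃ * |u - v| ^ (2*α)
          + 2 * ((r:ℝ)^2 * M₀ * M₁) * C𝔹 * |u - v| ^ (2*α) := by
          exact add_le_add (add_le_add hkey hmid) hbig
      _ = (K * G₃ + c₂ * G₁ + (r:ℝ)^2 * M₀ * M₁ * C𝔹 + G₃
          + 2 * ((r:ℝ)^2 * M₀ * M₁) * C𝔹) * |u - v| ^ (2*α) := by ring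
      _ ≤ M * (G₁ + C𝔹 + G₃) * |u - v| ^ (2*α) := by
          apply mul_le_mul_of_nonneg_right _ hw0'
          have h1 : (K + 1) * G₃ ≤ M * G₃ := mul_le_mul_of_nonneg_right hKM hG₃0
          have h2 : c₂ * G₁ ≤ M * G₁ := mul_le_mul_of_nonneg_right hc₂M hG₁0
          have h3 : (3 * ((r:ℝ)^2 * M₀ * M₁)) * C𝔹 ≤ M * C𝔹 :=
            mul_le_mul_of_nonneg_right h3M hCBB0
          linarith only [h1, h2, h3]
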